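/- Let P be a finite poset on n elements and ω : P → Fin n satisfy: (1) |{x : ω(x) ≤ i}| ≥ i+1 for all i, and (2) x > y implies ω(x) ≤ ω(y). Order permutations σ, π of P lexicographically by the first position where they differ, comparing entries in P. Let Λmax be the ω-legal permutations that are maximal in this order among ω-legal permutations (no ω-legal σ' with σ' > σ) and Λmin the minimal ones. Then |Λmin| ≤ |Λmax|. -/

import Mathlib

open scoped Classical

/-- `σ` is `ω`-legal: the label of the entry at each position is at most the position. -/
def OmegaLegal {n : ℕ} {P : Type*} [PartialOrder P] (ω : P → Fin n) (σ : Fin n ≃ P) : Prop :=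
  ∀ i : Fin n, ω (σ i) ≤ i

/-- `σ > π` : at the first position where they differ, the entry of `σ` is greater. -/
def PermGt {n : ℕ} {P : Type*} [PartialOrder P] (σ π : Fin n ≃ P) : Prop :=
  ∃ j : Fin n, π j < σ j ∧ ∀ i : Fin n, i < j → σ i = π i

set_option linter.unusedSectionVars false
set_option linter.unusedVariables false

section Aux
variable {n : ℕ} {P : Type*} [PartialOrder P]

def Asc (σ : Fin n ≃ P) (j k : Fin n) : Prop := j < k ∧ σ j < σ k

def LDesc (ω : P → Fin n) (σ : Fin n ≃ P) (a b : Fin n) : Prop :=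
  a < b ∧ σ b < σ a ∧ ω (σ b) ≤ a

def swapP (j k : Fin n) (σ : Fin n ≃ P) : Fin n ≃ P := (Equiv.swap j k).trans σ

def IsMinAsc (σ : Fin n ≃ P) (j k : Fin n) : Prop :=
  Asc σ j k ∧ (∀ u v, Asc σ u v → j ≤ u) ∧ (∀ v, Asc σ j v → k ≤ v)

def INV (ω : P → Fin n) (σ : Fin n ≃ P) : Prop :=
  ∀ a b u v, LDesc ω σ a b → Asc σ u v → a < u ∨ (a = u ∧ b ≤ v)

def Step (ω : P → Fin n) (σ σ' : Fin n ≃ P) : Prop :=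
  OmegaLegal ω σ ∧ INV ω σ ∧ ∃ j k, IsMinAsc σ j k ∧ σ' = swapP j k σ

def MinP (ω : P → Fin n) (σ : Fin n ≃ P) : Prop :=
  OmegaLegal ω σ ∧ ∀ a b, ¬ LDesc ω σ a b

def MaxP (ω : P → Fin n) (σ : Fin n ≃ P) : Prop :=
  OmegaLegal ω σ ∧ ∀ u v, ¬ Asc σ u v

@[simp] lemma swapP_left (j k : Fin n) (σ : Fin n ≃ P) : swapP j k σ j = σ k := by
  simp [swapP]

@[simp] lemma swapP_right (j k : Fin n) (σ : Fin n ≃ P) : swapP j k σ k = σ j := by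
  simp [swapP]

lemma swapP_other {j k i : Fin n} (σ : Fin n ≃ P) (h1 : i ≠ j) (h2 : i ≠ k) :
    swapP j k σ i = σ i := by
  simp [swapP, Equiv.swap_apply_of_ne_of_ne h1 h2]

lemma swapP_swapP (j k : Fin n) (σ : Fin n ≃ P) : swapP j k (swapP j k σ) = σ := by
  ext i
  rcases eq_or_ne i j with rfl | hij
  · simp
  · rcases eq_or_ne i k with rfl | hik
    · simp
    · rw [swapP_other _ hij hik, swapP_other _ hij hik]

variable {ω : P → Fin n} {σ : Fin n ≃ P} {j k : Fin n}

lemma legal_swap (hL : OmegaLegal ω σ) (hk : ω (σ k) ≤ j) (hjk : j < k) :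
    OmegaLegal ω (swapP j k σ) := by
  intro i
  rcases eq_or_ne i j with rfl | hij
  · simpa using hk
  · rcases eq_or_ne i k with rfl | hik
    · rw [swapP_right]
      exact le_trans (hL j) (le_of_lt hjk)
    · rw [swapP_other _ hij hik]
      exact hL i

lemma exists_isMinAsc (h : ∃ j k, Asc σ j k) : ∃ j k, IsMinAsc σ j k := by
  classical
  set J : Finset (Fin n) := Finset.univ.filter (fun j => ∃ k, Asc σ j k) with hJdef
  have hJ : J.Nonempty := by
    obtain ⟨j0, k0, h0⟩ := h
    exact ⟨j0, by simp [hJdef]; exact ⟨k0, h0⟩⟩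
  set j := J.min' hJ with hjdef
  have hjmem : ∃ k, Asc σ j k := by
    have := J.min'_mem hJ
    simpa [hJdef] using this
  set K : Finset (Fin n) := Finset.univ.filter (fun k => Asc σ j k) with hKdef
  have hK : K.Nonempty := by
    obtain ⟨k0, h0⟩ := hjmem
    exact ⟨k0, by simp [hKdef, h0]⟩
  set k := K.min' hK with hkdef
  have hkmem : Asc σ j k := by
    have := K.min'_mem hK
    simpa [hKdef] using this
  refine ⟨j, k, hkmem, ?_, ?_⟩
  · intro u v huv
    exact J.min'_le u (by simp [hJdef]; exact ⟨v, huv⟩)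
  · intro v hv
    exact K.min'_le v (by simp [hKdef, hv])

-- KeyA
lemma keyA_legal (hw : ∀ x y : P, y < x → ω x ≤ ω y) (hL : OmegaLegal ω σ) (hmin : IsMinAsc σ j k) :
    OmegaLegal ω (swapP j k σ) := by
  refine legal_swap hL ?_ hmin.1.1
  exact le_trans (hw _ _ hmin.1.2) (hL j)

lemma keyA_ldesc_jk (hL : OmegaLegal ω σ) (hmin : IsMinAsc σ j k) :
    LDesc ω (swapP j k σ) j k := by
  refine ⟨hmin.1.1, ?_, ?_⟩
  · rw [swapP_left, swapP_right]; exact hmin.1.2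
  · rw [swapP_right]; exact hL j

lemma keyA_ldesc_le (hInv : INV ω σ) (hmin : IsMinAsc σ j k)
    {a b : Fin n} (hd : LDesc ω (swapP j k σ) a b) :
    a < j ∨ (a = j ∧ b ≤ k) := by
  obtain ⟨hab, hlt, hwb⟩ := hd
  obtain ⟨⟨hjk, hxy⟩, hminj, hmink⟩ := hmin
  by_contra hcon
  push_neg at hcon
  obtain ⟨h1, h2⟩ := hcon
  -- h1 : ¬ a < j, h2 : a = j → ¬ b ≤ k
  have hja : j ≤ a := h1
  rcases eq_or_ne a j with rfl | haj
  · -- a = j, k < b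
    have hkb : k < b := h2 rfl
    have hbj : b ≠ a := (lt_trans hjk hkb).ne'
    have hbk : b ≠ k := hkb.ne'
    rw [swapP_left] at hlt
    rw [swapP_other σ hbj hbk] at hlt hwb
    have hdesc : LDesc ω σ k b := ⟨hkb, hlt, le_trans hwb (le_of_lt hjk)⟩
    rcases hInv _ _ _ _ hdesc ⟨hjk, hxy⟩ with h | ⟨h, _⟩
    · exact absurd h (not_lt_of_gt hjk)
    · exact absurd h (ne_of_gt hjk)
  · have hja' : j < a := lt_of_le_of_ne hja (Ne.symm haj)
    rcases eq_or_ne a k with rfl | hak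
    · -- a = k
      have hbj : b ≠ j := (lt_trans hja' hab).ne'
      have hbk : b ≠ a := hab.ne'
      rw [swapP_right] at hlt
      rw [swapP_other σ hbj hbk] at hlt hwb
      have hdesc : LDesc ω σ a b := ⟨hab, lt_trans hlt hxy, hwb⟩
      rcases hInv _ _ _ _ hdesc ⟨hjk, hxy⟩ with h | ⟨h, _⟩
      · exact absurd h (not_lt_of_gt hja')
      · exact absurd h haj
    · -- a ∉ {j,k}
      rw [swapP_other σ haj hak] at hlt
      rcases eq_or_ne b j with rfl | hbj
      · exact absurd hab (not_lt_of_gt hja')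
      · rcases eq_or_ne b k with rfl | hbk
        · -- b = k : ascent (j, a) with a < k contradicts minimality of k
          rw [swapP_right] at hlt hwb
          have : Asc σ j a := ⟨hja', hlt⟩
          exact absurd hab (not_lt_of_ge (hmink a this))
        · rw [swapP_other σ hbj hbk] at hlt hwb
          have hdesc : LDesc ω σ a b := ⟨hab, hlt, hwb⟩
          rcases hInv _ _ _ _ hdesc ⟨hjk, hxy⟩ with h | ⟨h, _⟩
          · exact absurd h (not_lt_of_gt hja')
          · exact absurd h haj

lemma keyA_asc_gt (hmin : IsMinAsc σ j k)
    {u v : Fin n} (ha : Asc (swapP j k σ) u v) :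
    j < u ∨ (j = u ∧ k < v) := by
  obtain ⟨huv, hlt⟩ := ha
  obtain ⟨⟨hjk, hxy⟩, hminj, hmink⟩ := hmin
  by_contra hcon
  push_neg at hcon
  obtain ⟨h1, h2⟩ := hcon
  have hu : u ≤ j := h1
  rcases eq_or_ne u j with rfl | huj
  · have hvk : v ≤ k := h2 rfl
    rw [swapP_left] at hlt
    rcases eq_or_ne v k with rfl | hvk'
    · rw [swapP_right] at hlt
      exact absurd hlt (not_lt_of_gt hxy)
    · have hvj : v ≠ u := huv.ne'
      rw [swapP_other σ hvj hvk'] at hlt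
      have : Asc σ u v := ⟨huv, lt_trans hxy hlt⟩
      exact absurd (hmink v this) (not_le_of_gt (lt_of_le_of_ne hvk hvk'))
  · have hu' : u < j := lt_of_le_of_ne hu huj
    have huk : u ≠ k := (lt_trans hu' hjk).ne
    rw [swapP_other σ huj huk] at hlt
    rcases eq_or_ne v j with rfl | hvj
    · rw [swapP_left] at hlt
      have : Asc σ u k := ⟨lt_trans hu' hjk, hlt⟩
      exact absurd (hminj _ _ this) (not_le_of_gt hu')
    · rcases eq_or_ne v k with rfl | hvk
      · rw [swapP_right] at hlt
        have : Asc σ u j := ⟨hu', hlt⟩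
        exact absurd (hminj _ _ this) (not_le_of_gt hu')
      · rw [swapP_other σ hvj hvk] at hlt
        have : Asc σ u v := ⟨huv, hlt⟩
        exact absurd (hminj _ _ this) (not_le_of_gt hu')

lemma keyA_inv (hInv : INV ω σ) (hmin : IsMinAsc σ j k) :
    INV ω (swapP j k σ) := by
  intro a b u v hd ha
  rcases keyA_ldesc_le hInv hmin hd with h | ⟨rfl, hb⟩ <;>
    rcases keyA_asc_gt hmin ha with h' | ⟨rfl, h'⟩
  · exact Or.inl (lt_trans h h')
  · exact Or.inl h
  · exact Or.inl h'
  · exact Or.inr ⟨rfl, le_of_lt (lt_of_le_of_lt hb h')⟩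


-- lex antisymmetry helper
lemma lex_antisymm {a b u v : Fin n}
    (h1 : a < u ∨ (a = u ∧ b ≤ v)) (h2 : u < a ∨ (u = a ∧ v ≤ b)) :
    a = u ∧ b = v := by
  rcases h1 with h | ⟨rfl, hb⟩ <;> rcases h2 with h' | ⟨h', hv⟩
  · exact absurd h' (not_lt_of_gt h)
  · exact absurd h' (ne_of_gt h)
  · exact absurd h' (not_lt_of_gt h').elim
  · exact ⟨rfl, le_antisymm hb hv⟩

-- KeyB : backward determinism
lemma keyB {σ₂ : Fin n ≃ P} {j₂ k₂ : Fin n}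
    (hL : OmegaLegal ω σ) (hInv : INV ω σ) (hmin : IsMinAsc σ j k)
    (hL₂ : OmegaLegal ω σ₂) (hInv₂ : INV ω σ₂) (hmin₂ : IsMinAsc σ₂ j₂ k₂)
    (heq : swapP j k σ = swapP j₂ k₂ σ₂) : σ = σ₂ := by
  have d1 : LDesc ω (swapP j k σ) j k := keyA_ldesc_jk hL hmin
  have d2 : LDesc ω (swapP j₂ k₂ σ₂) j₂ k₂ := keyA_ldesc_jk hL₂ hmin₂
  have e1 : j₂ < j ∨ (j₂ = j ∧ k₂ ≤ k) := keyA_ldesc_le hInv hmin (heq ▸ d2)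
  have e2 : j < j₂ ∨ (j = j₂ ∧ k ≤ k₂) := keyA_ldesc_le hInv₂ hmin₂ (heq ▸ d1)
  obtain ⟨hj, hk⟩ := lex_antisymm e2 e1
  subst hj; subst hk
  have := congrArg (swapP j k) heq
  rwa [swapP_swapP, swapP_swapP] at this

lemma lex_encode_lt {a b u v : Fin n} (h : a < u ∨ (a = u ∧ b < v)) :
    (a : ℕ) * n + b < (u : ℕ) * n + v := by
  rcases h with h | ⟨rfl, h⟩
  · have hb : (b : ℕ) < n := b.isLt
    have h1 : (a : ℕ) * n + b < ((a : ℕ) + 1) * n := by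
      rw [add_mul, one_mul]; omega
    have h2 : ((a : ℕ) + 1) * n ≤ (u : ℕ) * n :=
      Nat.mul_le_mul_right n (by exact_mod_cast Nat.succ_le_of_lt h)
    omega
  · have : (b : ℕ) < v := h
    omega

lemma encode_lt_sq {a b : Fin n} : (a : ℕ) * n + b < n * n := by
  have ha : (a : ℕ) < n := a.isLt
  have hb : (b : ℕ) < n := b.isLt
  have h1 : (a : ℕ) * n + b < ((a : ℕ) + 1) * n := by rw [add_mul, one_mul]; omega
  have h2 : ((a : ℕ) + 1) * n ≤ n * n := Nat.mul_le_mul_right n (by omega)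
  omega

-- existence of a reachable MaxP
lemma exists_maxP (hw : ∀ x y : P, y < x → ω x ≤ ω y) :
    ∀ (fuel : ℕ) (σ : Fin n ≃ P), OmegaLegal ω σ → INV ω σ →
    (∀ u v, Asc σ u v → n * n ≤ (u : ℕ) * n + v + fuel) →
    ∃ π, MaxP ω π ∧ Relation.ReflTransGen (Step ω) σ π := by
  intro fuel
  induction fuel with
  | zero =>
    intro σ hL _ hb
    refine ⟨σ, ⟨hL, ?_⟩, Relation.ReflTransGen.refl⟩
    intro u v hasc
    have := hb u v hasc
    have := @encode_lt_sq n u v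
    omega
  | succ fuel ih =>
    intro σ hL hInv hb
    by_cases ha : ∃ u v, Asc σ u v
    · obtain ⟨j, k, hmin⟩ := exists_isMinAsc ha
      have hL' := keyA_legal hw hL hmin
      have hInv' := keyA_inv hInv hmin
      have hb' : ∀ u v, Asc (swapP j k σ) u v → n * n ≤ (u : ℕ) * n + v + fuel := by
        intro u v hasc
        have hgt := keyA_asc_gt hmin hasc
        have hlt : (j : ℕ) * n + k < (u : ℕ) * n + v := lex_encode_lt hgt
        have := hb j k hmin.1
        omega
      obtain ⟨π, hπ, hreach⟩ := ih (swapP j k σ) hL' hInv' hb'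
      exact ⟨π, hπ, Relation.ReflTransGen.head ⟨hL, hInv, j, k, hmin, rfl⟩ hreach⟩
    · push_neg at ha
      exact ⟨σ, ⟨hL, ha⟩, Relation.ReflTransGen.refl⟩

-- uniqueness
lemma unique_minP (hw : ∀ x y : P, y < x → ω x ≤ ω y) :
    ∀ (fuel : ℕ) (π : Fin n ≃ P),
    (∀ a b, LDesc ω π a b → (a : ℕ) * n + b < fuel) →
    ∀ τ₁ τ₂, MinP ω τ₁ → MinP ω τ₂ →
    Relation.ReflTransGen (Step ω) τ₁ π → Relation.ReflTransGen (Step ω) τ₂ π →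
    τ₁ = τ₂ := by
  intro fuel
  induction fuel using Nat.strong_induction_on with
  | _ fuel ih =>
    intro π hfuel τ₁ τ₂ hm₁ hm₂ hr₁ hr₂
    rcases hr₁.cases_tail with rfl | ⟨ρ₁, hr₁', hs₁⟩
    · rcases hr₂.cases_tail with rfl | ⟨ρ₂, hr₂', hs₂⟩
      · rfl
      · obtain ⟨hLρ, hInvρ, j, k, hmin, rfl⟩ := hs₂
        exact absurd (keyA_ldesc_jk hLρ hmin) (hm₁.2 j k)
    · rcases hr₂.cases_tail with rfl | ⟨ρ₂, hr₂', hs₂⟩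
      · obtain ⟨hLρ, hInvρ, j, k, hmin, rfl⟩ := hs₁
        exact absurd (keyA_ldesc_jk hLρ hmin) (hm₂.2 j k)
      · obtain ⟨hLρ₁, hInvρ₁, j₁, k₁, hmin₁, rfl⟩ := hs₁
        obtain ⟨hLρ₂, hInvρ₂, j₂, k₂, hmin₂, heq⟩ := hs₂
        have hρ : ρ₁ = ρ₂ := keyB hLρ₁ hInvρ₁ hmin₁ hLρ₂ hInvρ₂ hmin₂ heq
        subst hρ
        -- new fuel
        have hdjk : LDesc ω (swapP j₁ k₁ ρ₁) j₁ k₁ := keyA_ldesc_jk hLρ₁ hmin₁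
        have hlt : (j₁ : ℕ) * n + k₁ < fuel := hfuel _ _ hdjk
        refine ih ((j₁ : ℕ) * n + k₁) hlt ρ₁ ?_ τ₁ τ₂ hm₁ hm₂ hr₁' hr₂'
        intro a b hd
        have h1 : a < j₁ ∨ (a = j₁ ∧ b ≤ k₁) := by
          rcases hInvρ₁ a b j₁ k₁ hd hmin₁.1 with h | ⟨rfl, hb⟩
          · exact Or.inl h
          · exact Or.inr ⟨rfl, hb⟩
        have h2 : a < j₁ ∨ (a = j₁ ∧ b < k₁) := by
          rcases h1 with h | ⟨rfl, hb⟩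
          · exact Or.inl h
          · refine Or.inr ⟨rfl, lt_of_le_of_ne hb ?_⟩
            rintro rfl
            exact absurd hmin₁.1.2 (not_lt_of_gt hd.2.1)
        exact lex_encode_lt h2


-- bridge lemmas
lemma exists_gt_iff_asc (hw : ∀ x y : P, y < x → ω x ≤ ω y) (hL : OmegaLegal ω σ) :
    (∃ σ' : Fin n ≃ P, OmegaLegal ω σ' ∧ PermGt σ' σ) ↔ ∃ u v, Asc σ u v := by
  constructor
  · rintro ⟨σ', hL', j, hlt, hag⟩
    have hv : ∃ v, σ v = σ' j := ⟨σ.symm (σ' j), σ.apply_symm_apply _⟩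
    obtain ⟨v, hσv⟩ := hv
    have hvj : v ≠ j := by
      rintro rfl
      rw [hσv] at hlt
      exact lt_irrefl _ hlt
    have hjv : j < v := by
      rcases lt_or_gt_of_ne hvj with h | h
      · have := hag v h
        rw [hσv] at this
        exact absurd (σ'.injective this.symm).symm hvj
      · exact h
    exact ⟨j, v, hjv, by rw [hσv]; exact hlt⟩
  · rintro ⟨u, v, huv, hlt⟩
    refine ⟨swapP u v σ, ?_, u, by rw [swapP_left]; exact hlt, ?_⟩
    · exact legal_swap hL (le_trans (hw _ _ hlt) (hL u)) huv
    · intro i hi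
      exact swapP_other σ (ne_of_lt hi) (ne_of_lt (lt_trans hi huv))

lemma exists_lt_iff_ldesc (hL : OmegaLegal ω σ) :
    (∃ σ' : Fin n ≃ P, OmegaLegal ω σ' ∧ PermGt σ σ') ↔ ∃ a b, LDesc ω σ a b := by
  constructor
  · rintro ⟨σ', hL', j, hlt, hag⟩
    have hb : ∃ b, σ b = σ' j := ⟨σ.symm (σ' j), σ.apply_symm_apply _⟩
    obtain ⟨b, hσb⟩ := hb
    have hbj : b ≠ j := by
      rintro rfl
      rw [hσb] at hlt
      exact lt_irrefl _ hlt
    have hjb : j < b := by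
      rcases lt_or_gt_of_ne hbj with h | h
      · have := hag b h
        rw [hσb] at this
        exact absurd (σ'.injective this).symm hbj
      · exact h
    refine ⟨j, b, hjb, by rw [hσb]; exact hlt, ?_⟩
    rw [hσb]
    exact hL' j
  · rintro ⟨a, b, hab, hlt, hwb⟩
    refine ⟨swapP a b σ, legal_swap hL hwb hab, a, by rw [swapP_left]; exact hlt, ?_⟩
    intro i hi
    exact (swapP_other σ (ne_of_lt hi) (ne_of_lt (lt_trans hi hab))).symm

end Aux

theorem card_min_le_card_max {n : ℕ} {P : Type*} [PartialOrder P] [Fintype P]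
    (hcard : Fintype.card P = n) (ω : P → Fin n)
    (h1 : ∀ i : Fin n, (i : ℕ) + 1 ≤ (Finset.univ.filter fun x : P => ω x ≤ i).card)
    (h2 : ∀ x y : P, y < x → ω x ≤ ω y) :
    (Finset.univ.filter fun σ : Fin n ≃ P =>
        OmegaLegal ω σ ∧ ¬ ∃ σ' : Fin n ≃ P, OmegaLegal ω σ' ∧ PermGt σ σ').card ≤
      (Finset.univ.filter fun σ : Fin n ≃ P =>
        OmegaLegal ω σ ∧ ¬ ∃ σ' : Fin n ≃ P, OmegaLegal ω σ' ∧ PermGt σ' σ).card := by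
  classical
  have hminset : (Finset.univ.filter fun σ : Fin n ≃ P =>
      OmegaLegal ω σ ∧ ¬ ∃ σ' : Fin n ≃ P, OmegaLegal ω σ' ∧ PermGt σ σ') =
      (Finset.univ.filter fun σ : Fin n ≃ P => MinP ω σ) := by
    ext σ
    simp only [Finset.mem_filter, Finset.mem_univ, true_and]
    constructor
    · rintro ⟨hL, hno⟩
      refine ⟨hL, fun a b hd => hno ?_⟩
      exact (exists_lt_iff_ldesc hL).mpr ⟨a, b, hd⟩
    · rintro ⟨hL, hno⟩
      refine ⟨hL, fun hex => ?_⟩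
      obtain ⟨a, b, hd⟩ := (exists_lt_iff_ldesc hL).mp hex
      exact hno a b hd
  have hmaxset : (Finset.univ.filter fun σ : Fin n ≃ P =>
      OmegaLegal ω σ ∧ ¬ ∃ σ' : Fin n ≃ P, OmegaLegal ω σ' ∧ PermGt σ' σ) =
      (Finset.univ.filter fun σ : Fin n ≃ P => MaxP ω σ) := by
    ext σ
    simp only [Finset.mem_filter, Finset.mem_univ, true_and]
    constructor
    · rintro ⟨hL, hno⟩
      refine ⟨hL, fun u v ha => hno ?_⟩
      exact (exists_gt_iff_asc h2 hL).mpr ⟨u, v, ha⟩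
    · rintro ⟨hL, hno⟩
      refine ⟨hL, fun hex => ?_⟩
      obtain ⟨u, v, ha⟩ := (exists_gt_iff_asc h2 hL).mp hex
      exact hno u v ha
  rw [hminset, hmaxset]
  -- build the injection
  have hEX : ∀ σ : Fin n ≃ P, MinP ω σ →
      ∃ π, MaxP ω π ∧ Relation.ReflTransGen (Step ω) σ π := by
    intro σ hm
    refine exists_maxP h2 (n * n) σ hm.1 ?_ ?_
    · intro a b u v hd _
      exact absurd hd (hm.2 a b)
    · intro u v _
      exact Nat.le_add_left _ _
  set f : (Fin n ≃ P) → (Fin n ≃ P) := fun σ =>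
    if h : MinP ω σ then Classical.choose (hEX σ h) else σ with hf
  refine Finset.card_le_card_of_injOn f ?_ ?_
  · intro σ hσ
    simp only [Finset.mem_coe, Finset.mem_filter, Finset.mem_univ, true_and] at hσ ⊢
    rw [hf]
    simp only [dif_pos hσ]
    exact (Classical.choose_spec (hEX σ hσ)).1
  · intro σ₁ hσ₁ σ₂ hσ₂ hfeq
    simp only [Finset.coe_filter, Set.mem_setOf_eq, Finset.mem_univ, true_and] at hσ₁ hσ₂
    rw [hf] at hfeq
    simp only [dif_pos hσ₁, dif_pos hσ₂] at hfeq
    have hs₁ := Classical.choose_spec (hEX σ₁ hσ₁)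
    have hs₂ := Classical.choose_spec (hEX σ₂ hσ₂)
    refine unique_minP h2 (n * n) (Classical.choose (hEX σ₁ hσ₁)) ?_ σ₁ σ₂ hσ₁ hσ₂ hs₁.2 ?_
    · intro a b _
      exact encode_lt_sq
    · rw [hfeq]
      exact hs₂.2
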